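/- Let P ⊆ ℝ^d be locally η-regular with f and r̄ (as in the context) and define η(p) := sup{ η ∈ (0, r̄) : f(p,η) holds } (with sup ∅ = 0). Then for every ε ∈ (0,1/2) and all p, p̃ ∈ P with |p − p̃| < ε·η(p) one has η(p) − |p − p̃| ≤ η(p̃) ≤ ((1−ε)/(1−2ε))·η(p), and in particular η(p̃) > (1−ε)·η(p). Moreover, for every ε ∈ (0,1/2) and all p, p̃ ∈ P: if |p − p̃| ≤ ε·max{η(p), η(p̃)}, then |p − p̃| ≤ (ε/(1−ε))·min{η(p), η(p̃)}. -/

import Mathlib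

section Aux

variable {d : ℕ} {P : Set (EuclideanSpace ℝ (Fin d))} {rbar : ℝ}
  {f : EuclideanSpace ℝ (Fin d) → ℝ → Prop}
  {ηf : EuclideanSpace ℝ (Fin d) → ℝ}

lemma aux_nonneg (hη : ∀ p, ηf p = sSup {η : ℝ | 0 < η ∧ η < rbar ∧ f p η})
    (p : EuclideanSpace ℝ (Fin d)) : 0 ≤ ηf p := by
  rw [hη]
  exact Real.sSup_nonneg (fun x hx => hx.1.le)

lemma aux_le_rbar (hr : 0 < rbar)
    (hη : ∀ p, ηf p = sSup {η : ℝ | 0 < η ∧ η < rbar ∧ f p η})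
    (p : EuclideanSpace ℝ (Fin d)) : ηf p ≤ rbar := by
  rw [hη]
  exact Real.sSup_le (fun x hx => hx.2.1.le) hr.le

lemma aux_mem (hmono : ∀ p ∈ P, ∀ η η' : ℝ, 0 < η' → η' ≤ η → η ≤ rbar → f p η → f p η')
    (hη : ∀ p, ηf p = sSup {η : ℝ | 0 < η ∧ η < rbar ∧ f p η})
    {p : EuclideanSpace ℝ (Fin d)} (hp : p ∈ P) {η : ℝ} (h0 : 0 < η) (h1 : η < ηf p) :
    f p η := by
  rw [hη] at h1
  have hne : {η : ℝ | 0 < η ∧ η < rbar ∧ f p η}.Nonempty := by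
    rcases Set.eq_empty_or_nonempty {η : ℝ | 0 < η ∧ η < rbar ∧ f p η} with h | h
    · rw [h, Real.sSup_empty] at h1; linarith
    · exact h
  obtain ⟨x, hx, hlt⟩ := exists_lt_of_lt_csSup hne h1
  exact hmono p hp x η h0 hlt.le hx.2.1.le hx.2.2

lemma aux_le (hη : ∀ p, ηf p = sSup {η : ℝ | 0 < η ∧ η < rbar ∧ f p η})
    (p : EuclideanSpace ℝ (Fin d)) {η : ℝ} (h0 : 0 < η) (h1 : η < rbar) (hf : f p η) :
    η ≤ ηf p := by
  rw [hη]
  exact le_csSup ⟨rbar, fun x hx => hx.2.1.le⟩ ⟨h0, h1, hf⟩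

lemma aux_KB (hr : 0 < rbar)
    (hmono : ∀ p ∈ P, ∀ η η' : ℝ, 0 < η' → η' ≤ η → η ≤ rbar → f p η → f p η')
    (hprop : ∀ p ∈ P, ∀ η : ℝ, 0 < η → η ≤ rbar → f p η →
      ∀ ε : ℝ, 0 < ε → ε < 1/2 → ∀ q ∈ P, dist p q < ε * η →
        ∀ η₂ : ℝ, 0 < η₂ → η₂ < (1 - ε) * η → f q η₂)
    (hη : ∀ p, ηf p = sSup {η : ℝ | 0 < η ∧ η < rbar ∧ f p η})
    {ε : ℝ} (hε : 0 < ε) (hε2 : ε < 1/2)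
    {p : EuclideanSpace ℝ (Fin d)} (hp : p ∈ P)
    {q : EuclideanSpace ℝ (Fin d)} (hq : q ∈ P)
    (hd : dist p q < ε * ηf p) : ηf p - dist p q ≤ ηf q := by
  set D := dist p q with hDdef
  have hD0 : 0 ≤ D := dist_nonneg
  have hp0 : 0 < ηf p := by nlinarith
  have hDlt : D < ηf p / 2 := by nlinarith
  have key : ∀ η₂ : ℝ, 0 < η₂ → η₂ < ηf p - D → η₂ ≤ ηf q := by
    intro η₂ h2 h2'
    set m := max (η₂ + D) (2*D) with hm
    have hm1 : η₂ + D ≤ m := le_max_left _ _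
    have hm2 : 2*D ≤ m := le_max_right _ _
    have hmlt : m < ηf p := by
      apply max_lt
      · linarith
      · linarith
    set η := (m + ηf p)/2 with hηdef
    have hη0 : 0 < η := by simp only [hηdef]; linarith
    have hηlt : η < ηf p := by simp only [hηdef]; linarith
    have hmη : m < η := by simp only [hηdef]; linarith
    have hfp : f p η := aux_mem hmono hη hp hη0 hηlt
    have hDη : 2*D < η := lt_of_le_of_lt hm2 hmη
    have h2η : η₂ + D < η := lt_of_le_of_lt hm1 hmη
    set M := min (1/2 : ℝ) (1 - η₂/η) with hM
    have hMa : D/η < 1/2 := by rw [div_lt_iff₀ hη0]; linarith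
    have hMb : D/η < 1 - η₂/η := by
      have h1 : D/η + η₂/η < 1 := by
        rw [← add_div, div_lt_one hη0]; linarith
      linarith
    have hDM : D/η < M := lt_min hMa hMb
    have hD'0 : 0 ≤ D/η := div_nonneg hD0 hη0.le
    set ε' := (D/η + M)/2 with hε'
    have hε'0 : 0 < ε' := by simp only [hε']; linarith
    have hε'half : ε' < 1/2 := by
      have : ε' < M := by simp only [hε']; linarith
      have := min_le_left (1/2 : ℝ) (1 - η₂/η)
      simp only [← hM] at this
      linarith
    have hdε' : D < ε' * η := by
      have : D/η < ε' := by simp only [hε']; linarith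
      calc D = D/η * η := by field_simp
        _ < ε' * η := by exact mul_lt_mul_of_pos_right this hη0
    have h2ε' : η₂ < (1 - ε') * η := by
      have hεM : ε' < M := by simp only [hε']; linarith
      have hM2 : M ≤ 1 - η₂/η := min_le_right _ _
      have : η₂/η < 1 - ε' := by linarith
      calc η₂ = η₂/η * η := by field_simp
        _ < (1 - ε') * η := mul_lt_mul_of_pos_right this hη0
    have hfq : f q η₂ := hprop p hp η hη0 (hηlt.le.trans (aux_le_rbar hr hη p)) hfp
      ε' hε'0 hε'half q hq hdε' η₂ h2 h2ε'
    have hrb : η₂ < rbar := by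
      have := aux_le_rbar hr hη p
      linarith
    exact aux_le hη q h2 hrb hfq
  by_contra hcon
  push_neg at hcon
  have hq0 : 0 ≤ ηf q := aux_nonneg hη q
  set c := (max (ηf q) 0 + (ηf p - D))/2 with hc
  have hmax : max (ηf q) 0 < ηf p - D := by
    apply max_lt hcon
    nlinarith
  have hc1 : max (ηf q) 0 < c := by simp only [hc]; linarith
  have hc0 : 0 < c := lt_of_le_of_lt (le_max_right _ _) hc1
  have hc2 : c < ηf p - D := by simp only [hc]; linarith
  have := key c hc0 hc2
  have : c ≤ max (ηf q) 0 := this.trans (le_max_left _ _)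
  linarith

end Aux


/-- **Local Lipschitz continuity of the regularity radius** (Lemma 2.14 of the paper).
`P ⊆ ℝ^d` is locally `η`-regular with predicate `f` and `rbar > 0`: `f p ·` is monotone
(decreasing in the radius) and satisfies the propagation property.  With
`η(p) := sup {η ∈ (0,rbar) : f p η}` (sup ∅ = 0), for every `ε ∈ (0,1/2)` and `p, q ∈ P` with
`|p-q| < ε η(p)` one has `η(p) - |p-q| ≤ η(q) ≤ (1-ε)/(1-2ε) · η(p)` and
`η(q) > (1-ε) η(p)`; moreover `|p-q| ≤ ε max{η(p),η(q)}` implies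
`|p-q| ≤ ε/(1-ε) · min{η(p),η(q)}`. -/
theorem stmt2 (d : ℕ) (P : Set (EuclideanSpace ℝ (Fin d))) (rbar : ℝ) (hr : 0 < rbar)
    (f : EuclideanSpace ℝ (Fin d) → ℝ → Prop)
    (hmono : ∀ p ∈ P, ∀ η η' : ℝ, 0 < η' → η' ≤ η → η ≤ rbar → f p η → f p η')
    (hprop : ∀ p ∈ P, ∀ η : ℝ, 0 < η → η ≤ rbar → f p η →
      ∀ ε : ℝ, 0 < ε → ε < 1/2 → ∀ q ∈ P, dist p q < ε * η →
        ∀ η₂ : ℝ, 0 < η₂ → η₂ < (1 - ε) * η → f q η₂)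
    (ηf : EuclideanSpace ℝ (Fin d) → ℝ)
    (hη : ∀ p, ηf p = sSup {η : ℝ | 0 < η ∧ η < rbar ∧ f p η}) :
    (∀ ε : ℝ, 0 < ε → ε < 1/2 → ∀ p ∈ P, ∀ q ∈ P, dist p q < ε * ηf p →
      ηf p - dist p q ≤ ηf q ∧ ηf q ≤ (1 - ε) / (1 - 2*ε) * ηf p ∧
        (1 - ε) * ηf p < ηf q) ∧
    (∀ ε : ℝ, 0 < ε → ε < 1/2 → ∀ p ∈ P, ∀ q ∈ P,
      dist p q ≤ ε * max (ηf p) (ηf q) →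
      dist p q ≤ ε / (1 - ε) * min (ηf p) (ηf q)) := by
  -- directed version of part 2:
  have part2' : ∀ ε : ℝ, 0 < ε → ε < 1/2 → ∀ p ∈ P, ∀ q ∈ P, ηf q ≤ ηf p →
      dist p q ≤ ε * ηf p → dist p q ≤ ε / (1 - ε) * ηf q := by
    intro ε hε hε2 p hp q hq hle hd
    have hε1 : 0 < 1 - ε := by linarith
    have hq0 : 0 ≤ ηf q := aux_nonneg hη q
    rcases le_or_gt (ηf p) 0 with h0 | h0
    · have hD0 : 0 ≤ dist p q := dist_nonneg
      have : dist p q ≤ 0 := by nlinarith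
      have hrhs : 0 ≤ ε / (1 - ε) * ηf q := by positivity
      linarith
    · set ε' := (ε + 1/2)/2 with hε'
      have hε'0 : 0 < ε' := by simp only [hε']; linarith
      have hε'half : ε' < 1/2 := by simp only [hε']; linarith
      have hεε' : ε < ε' := by simp only [hε']; linarith
      have hd' : dist p q < ε' * ηf p := by nlinarith
      have hKB := aux_KB hr hmono hprop hη hε'0 hε'half hp hq hd'
      -- ε * ηf q ≥ ε * ηf p - ε * D ≥ D - ε D
      have h1 : ε * (ηf p - dist p q) ≤ ε * ηf q := by
        exact mul_le_mul_of_nonneg_left hKB hε.le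
      have h2 : (1 - ε) * dist p q ≤ ε * ηf q := by nlinarith
      rw [div_mul_eq_mul_div, le_div_iff₀ hε1]
      linarith [h2, mul_comm (dist p q) (1 - ε)]
  constructor
  · intro ε hε hε2 p hp q hq hd
    have hD0 : 0 ≤ dist p q := dist_nonneg
    have hp0 : 0 < ηf p := by nlinarith
    have hKB := aux_KB hr hmono hprop hη hε hε2 hp hq hd
    refine ⟨hKB, ?_, by linarith⟩
    by_contra hcon
    push_neg at hcon
    have h12 : 0 < 1 - 2*ε := by linarith
    have hfac : ηf p < ηf q := by
      have h1 : 1 < (1 - ε) / (1 - 2*ε) := by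
        rw [lt_div_iff₀ h12]; linarith
      nlinarith
    have hdq : dist p q < ε * ηf q := by nlinarith
    have hKBq := aux_KB hr hmono hprop hη hε hε2 hq hp (by rwa [dist_comm])
    rw [dist_comm] at hKBq
    have h' : (1 - ε) * ηf p < ηf q * (1 - 2*ε) := by
      rw [div_mul_eq_mul_div, div_lt_iff₀ h12] at hcon
      linarith [hcon]
    nlinarith
  · intro ε hε hε2 p hp q hq hd
    rcases le_total (ηf q) (ηf p) with hle | hle
    · rw [max_eq_left hle] at hd
      rw [min_eq_right hle]
      exact part2' ε hε hε2 p hp q hq hle hd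
    · rw [max_eq_right hle] at hd
      rw [min_eq_left hle, dist_comm] at *
      exact part2' ε hε hε2 q hq p hp hle hd
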